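/- Let 0 < s < 1/2 and f ∈ L²(ℝ). Then Σ_M M^{2s}‖P_M f‖²_{L²} ≤ C(s) (‖f‖²_{H^{-1}} + Σ_{N ∈ 2^ℕ} N^{2s} ∫ w(ξ,N)|f̂(ξ)|² dξ), where P_M are Littlewood–Paley projections and w(ξ,N) = 3N²ξ²/(4(ξ²+N²)(ξ²+4N²)). -/

import Mathlib

set_option maxHeartbeats 1000000

open MeasureTheory Set

/-- The weight `w(ξ,κ) = 3κ²ξ²/(4(ξ²+κ²)(ξ²+4κ²))`. -/
noncomputable def w (ξ κ : ℝ) : ℝ :=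
  3 * κ ^ 2 * ξ ^ 2 / (4 * (ξ ^ 2 + κ ^ 2) * (ξ ^ 2 + 4 * κ ^ 2))

/-- The `k`-th Littlewood–Paley frequency region: `{|ξ| ≤ 1}` for `k = 0`,
`{2^{k-1} < |ξ| ≤ 2^k}` for `k ≥ 1`. -/
def LPregion (k : ℕ) : Set ℝ :=
  if k = 0 then {ξ : ℝ | |ξ| ≤ 1}
  else {ξ : ℝ | (2 : ℝ) ^ (k - 1) < |ξ| ∧ |ξ| ≤ (2 : ℝ) ^ k}

lemma w_denom_pos (ξ κ : ℝ) (hκ : 0 < κ) :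
    0 < 4 * (ξ ^ 2 + κ ^ 2) * (ξ ^ 2 + 4 * κ ^ 2) := by positivity

lemma w_nonneg (ξ κ : ℝ) : 0 ≤ w ξ κ := by
  unfold w; positivity

lemma w_le_const (ξ κ : ℝ) (hκ : 0 < κ) : w ξ κ ≤ 3 / 16 := by
  unfold w
  rw [div_le_iff₀ (w_denom_pos ξ κ hκ)]
  nlinarith [mul_nonneg (sq_nonneg ξ) (sq_nonneg κ), sq_nonneg (ξ ^ 2), sq_nonneg (κ ^ 2)]

lemma w_le_hi (ξ κ : ℝ) (hκ : 0 < κ) : w ξ κ ≤ 3 * ξ ^ 2 / κ ^ 2 := by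
  unfold w
  rw [div_le_div_iff₀ (w_denom_pos ξ κ hκ) (by positivity)]
  nlinarith [sq_nonneg ξ, sq_nonneg κ, sq_nonneg (ξ * κ), sq_nonneg (ξ ^ 2), sq_nonneg (ξ ^ 2 * κ)]

lemma w_le_lo (ξ κ : ℝ) (hκ : 0 < κ) (hξ : ξ ≠ 0) : w ξ κ ≤ 3 * κ ^ 2 / (4 * ξ ^ 2) := by
  unfold w
  have hξ2 : 0 < ξ ^ 2 := by positivity
  rw [div_le_div_iff₀ (w_denom_pos ξ κ hκ) (by positivity)]
  nlinarith [mul_nonneg (mul_nonneg (sq_nonneg κ) (sq_nonneg ξ)) (sq_nonneg κ),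
    mul_nonneg (sq_nonneg κ) (sq_nonneg (κ ^ 2))]

lemma w_continuous (κ : ℝ) (hκ : 0 < κ) : Continuous fun ξ => w ξ κ := by
  unfold w
  exact Continuous.div (by continuity) (by continuity) (fun ξ => by positivity)

lemma LP_abs_le {k : ℕ} {ξ : ℝ} (h : ξ ∈ LPregion k) : |ξ| ≤ 2 ^ k := by
  rcases Nat.eq_zero_or_pos k with hk | hk
  · subst hk; simpa [LPregion] using h
  · rw [LPregion, if_neg hk.ne'] at h; exact h.2

lemma LP_lt_abs {k : ℕ} (hk : k ≠ 0) {ξ : ℝ} (h : ξ ∈ LPregion k) : (2:ℝ) ^ (k - 1) < |ξ| := by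
  rw [LPregion, if_neg hk] at h; exact h.1

lemma LP_measurableSet (k : ℕ) : MeasurableSet (LPregion k) := by
  rw [LPregion]
  split
  · exact (isClosed_le continuous_abs continuous_const).measurableSet
  · exact ((isOpen_lt continuous_const continuous_abs).measurableSet).inter
      (isClosed_le continuous_abs continuous_const).measurableSet

lemma LP_disjoint : Pairwise (Function.onFun Disjoint LPregion) := by
  have key : ∀ j k : ℕ, j < k → Disjoint (LPregion j) (LPregion k) := by
    intro j k hjk
    rw [Set.disjoint_left]
    intro ξ hj hk
    have h1 : |ξ| ≤ 2 ^ j := LP_abs_le hj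
    have h2 : (2:ℝ) ^ (k - 1) < |ξ| := LP_lt_abs (by omega) hk
    have h3 : (2:ℝ) ^ j ≤ 2 ^ (k - 1) := by
      apply pow_le_pow_right₀ (by norm_num)
      omega
    linarith
  intro j k hjk
  rcases hjk.lt_or_gt with h | h
  · exact key j k h
  · exact (key k j h).symm

lemma LP_iUnion : (⋃ k, LPregion k) = univ := by
  ext ξ
  simp only [Set.mem_iUnion, Set.mem_univ, iff_true]
  rcases le_or_gt |ξ| 1 with h | h
  · exact ⟨0, by simpa [LPregion] using h⟩
  · have hex : ∃ n : ℕ, |ξ| ≤ 2 ^ n := by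
      obtain ⟨n, hn⟩ := pow_unbounded_of_one_lt |ξ| (by norm_num : (1:ℝ) < 2)
      exact ⟨n, hn.le⟩
    classical
    set k := Nat.find hex with hkdef
    have hk : |ξ| ≤ 2 ^ k := Nat.find_spec hex
    have hk0 : k ≠ 0 := by
      intro h0
      rw [h0] at hk; simp at hk; linarith
    have hkm : ¬ (|ξ| ≤ 2 ^ (k - 1)) := Nat.find_min hex (by omega)
    exact ⟨k, by rw [LPregion, if_neg hk0]; exact ⟨lt_of_not_ge hkm, hk⟩⟩

lemma two_pow_div_eq {a b : ℕ} (hab : a ≤ b) :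
    (2:ℝ) ^ (2*a) / (2:ℝ) ^ (2*b) = ((2:ℝ)⁻¹) ^ (2*(b-a)) := by
  have h : (2:ℝ) ^ (2*b) = 2 ^ (2*a) * 2 ^ (2*(b-a)) := by
    rw [← pow_add]; congr 1; omega
  rw [h, inv_pow]
  rw [div_eq_iff (by positivity)]
  field_simp

lemma w_region_bound {k n : ℕ} {ξ : ℝ} (h : ξ ∈ LPregion k) :
    w ξ ((2:ℝ) ^ n) ≤ 3 * ((2:ℝ)⁻¹) ^ (2 * Nat.dist n k) := by
  have h2n : (0:ℝ) < 2 ^ n := by positivity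
  rcases le_or_gt k n with hkn | hnk
  · have habs : |ξ| ≤ 2 ^ k := LP_abs_le h
    have hsq : ξ ^ 2 ≤ ((2:ℝ) ^ k) ^ 2 := by nlinarith [abs_nonneg ξ, sq_abs ξ]
    have hd : Nat.dist n k = n - k := Nat.dist_eq_sub_of_le_right hkn
    have e1 : (3:ℝ) * ((2:ℝ) ^ k) ^ 2 / ((2:ℝ) ^ n) ^ 2 = 3 * ((2:ℝ)⁻¹) ^ (2 * Nat.dist n k) := by
      rw [hd, mul_div_assoc, ← pow_mul, ← pow_mul, mul_comm k 2, mul_comm n 2,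
        two_pow_div_eq hkn]
    calc w ξ ((2:ℝ) ^ n) ≤ 3 * ξ ^ 2 / ((2:ℝ) ^ n) ^ 2 := w_le_hi ξ _ h2n
      _ ≤ 3 * ((2:ℝ) ^ k) ^ 2 / ((2:ℝ) ^ n) ^ 2 := by
          apply div_le_div_of_nonneg_right (by linarith) (by positivity)
      _ = 3 * ((2:ℝ)⁻¹) ^ (2 * Nat.dist n k) := e1
  · have hk0 : k ≠ 0 := by omega
    have hlow : (2:ℝ) ^ (k-1) < |ξ| := LP_lt_abs hk0 h
    have hp : (0:ℝ) < 2 ^ (k-1) := by positivity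
    have hξ : ξ ≠ 0 := by
      intro h0; rw [h0, abs_zero] at hlow; linarith
    have hsq : ((2:ℝ) ^ (k-1)) ^ 2 ≤ ξ ^ 2 := by nlinarith [sq_abs ξ]
    have hd : Nat.dist n k = k - n := Nat.dist_eq_sub_of_le hnk.le
    have e2 : (4:ℝ) * ((2:ℝ) ^ (k-1)) ^ 2 = (2:ℝ) ^ (2*k) := by
      rw [← pow_mul, show (4:ℝ) = 2^2 by norm_num, ← pow_add]
      congr 1; omega
    have e1 : (3:ℝ) * ((2:ℝ) ^ n) ^ 2 / ((2:ℝ) ^ (2*k)) = 3 * ((2:ℝ)⁻¹) ^ (2 * Nat.dist n k) := by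
      rw [hd, mul_div_assoc, ← pow_mul, mul_comm n 2, two_pow_div_eq hnk.le]
    calc w ξ ((2:ℝ) ^ n) ≤ 3 * ((2:ℝ) ^ n) ^ 2 / (4 * ξ ^ 2) := w_le_lo ξ _ h2n hξ
      _ ≤ 3 * ((2:ℝ) ^ n) ^ 2 / (4 * ((2:ℝ) ^ (k-1)) ^ 2) := by
          apply div_le_div_of_nonneg_left (by positivity) (by positivity) (by linarith)
      _ = 3 * ((2:ℝ)⁻¹) ^ (2 * Nat.dist n k) := by rw [e2] at *; exact e1

lemma w_region_lower {k : ℕ} (hk : k ≠ 0) {ξ : ℝ} (h : ξ ∈ LPregion k) :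
    3 / 160 ≤ w ξ ((2:ℝ) ^ k) := by
  have h2k : (0:ℝ) < 2 ^ k := by positivity
  have hlow : (2:ℝ) ^ (k-1) < |ξ| := LP_lt_abs hk h
  have habs : |ξ| ≤ 2 ^ k := LP_abs_le h
  have hp : (0:ℝ) < 2 ^ (k-1) := by positivity
  have hsq1 : ((2:ℝ) ^ (k-1)) ^ 2 ≤ ξ ^ 2 := by nlinarith [sq_abs ξ]
  have hsq2 : ξ ^ 2 ≤ ((2:ℝ) ^ k) ^ 2 := by nlinarith [abs_nonneg ξ, sq_abs ξ]
  have e2 : (4:ℝ) * ((2:ℝ) ^ (k-1)) ^ 2 = ((2:ℝ) ^ k) ^ 2 := by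
    rw [← pow_mul, ← pow_mul, show (4:ℝ) = 2^2 by norm_num, ← pow_add]
    congr 1; omega
  have hq : ((2:ℝ) ^ k) ^ 2 ≤ 4 * ξ ^ 2 := by nlinarith
  unfold w
  rw [le_div_iff₀ (w_denom_pos _ _ h2k)]
  nlinarith [sq_nonneg ξ, mul_pos h2k h2k]

lemma coeff_bound {s : ℝ} (hs : 0 < s) (n k : ℕ) :
    ((2:ℝ) ^ n) ^ (2*s) * (3 * ((2:ℝ)⁻¹) ^ (2 * Nat.dist n k)) ≤
      3 * ((2:ℝ) ^ (2*s - 2 : ℝ)) ^ (Nat.dist n k) * ((2:ℝ) ^ k) ^ (2*s) := by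
  have h2 : (0:ℝ) ≤ 2 := by norm_num
  have e1 : ((2:ℝ) ^ n) ^ (2*s) = (2:ℝ) ^ ((n:ℝ) * (2*s)) := by
    rw [← Real.rpow_natCast 2 n, ← Real.rpow_mul h2]
  have e2 : ((2:ℝ) ^ k) ^ (2*s) = (2:ℝ) ^ ((k:ℝ) * (2*s)) := by
    rw [← Real.rpow_natCast 2 k, ← Real.rpow_mul h2]
  have e3 : ∀ d : ℕ, ((2:ℝ)⁻¹) ^ (2 * d) = (2:ℝ) ^ (-(2 * (d:ℝ))) := by
    intro d
    rw [← Real.rpow_neg_one 2, ← Real.rpow_natCast ((2:ℝ) ^ (-1 : ℝ)) (2*d),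
      ← Real.rpow_mul h2]
    push_cast
    ring_nf
  have e4 : ∀ d : ℕ, ((2:ℝ) ^ (2*s - 2 : ℝ)) ^ d = (2:ℝ) ^ ((2*s - 2) * (d:ℝ)) := by
    intro d
    rw [← Real.rpow_natCast ((2:ℝ) ^ (2*s-2 : ℝ)) d, ← Real.rpow_mul h2]
  rw [e1, e2, e3, e4]
  set d := Nat.dist n k with hd
  rw [mul_comm (((2:ℝ)) ^ ((n:ℝ)*(2*s))) _, mul_assoc, mul_assoc, ← Real.rpow_add (by norm_num),
    ← Real.rpow_add (by norm_num)]
  apply mul_le_mul_of_nonneg_left _ (by norm_num)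
  rw [Real.rpow_le_rpow_left_iff (by norm_num : (1:ℝ) < 2)]
  rcases le_total n k with hnk | hkn
  · have hcast : (d:ℝ) = (k:ℝ) - (n:ℝ) := by
      rw [hd, Nat.dist_eq_sub_of_le hnk]
      push_cast [hnk]; ring
    rw [hcast]
    have hnk' : (n:ℝ) ≤ (k:ℝ) := by exact_mod_cast hnk
    nlinarith
  · have hcast : (d:ℝ) = (n:ℝ) - (k:ℝ) := by
      rw [hd, Nat.dist_eq_sub_of_le_right hkn]
      push_cast [hkn]; ring
    rw [hcast]
    nlinarith

lemma geom_dist_sum_le {r : ℝ} (hr0 : 0 ≤ r) (hr1 : r < 1) (k : ℕ) (F : Finset ℕ) :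
    ∑ n ∈ F, r ^ (Nat.dist n k) ≤ 2 / (1 - r) := by
  classical
  have hsum : Summable (fun j : ℕ => r ^ j) := summable_geometric_of_lt_one hr0 hr1
  have htsum : ∑' j : ℕ, r ^ j = (1 - r)⁻¹ := tsum_geometric_of_lt_one hr0 hr1
  have part := Finset.sum_filter_add_sum_filter_not F (fun n => n ≤ k)
    (fun n => r ^ (Nat.dist n k))
  have h1 : ∑ n ∈ F.filter (fun n => n ≤ k), r ^ (Nat.dist n k) ≤ (1 - r)⁻¹ := by
    have inj : ∀ x ∈ F.filter (fun n => n ≤ k), ∀ y ∈ F.filter (fun n => n ≤ k),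
        k - x = k - y → x = y := by
      intro x hx y hy hxy
      simp only [Finset.mem_filter] at hx hy
      omega
    calc ∑ n ∈ F.filter (fun n => n ≤ k), r ^ (Nat.dist n k)
        = ∑ n ∈ F.filter (fun n => n ≤ k), r ^ (k - n) := by
          apply Finset.sum_congr rfl
          intro n hn
          simp only [Finset.mem_filter] at hn
          rw [Nat.dist_eq_sub_of_le hn.2]
      _ = ∑ j ∈ (F.filter (fun n => n ≤ k)).image (fun n => k - n), r ^ j :=
          (Finset.sum_image inj).symm
      _ ≤ ∑' j : ℕ, r ^ j := Summable.sum_le_tsum _ (fun j _ => by positivity) hsum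
      _ = (1 - r)⁻¹ := htsum
  have h2 : ∑ n ∈ F.filter (fun n => ¬ n ≤ k), r ^ (Nat.dist n k) ≤ (1 - r)⁻¹ := by
    have inj : ∀ x ∈ F.filter (fun n => ¬ n ≤ k), ∀ y ∈ F.filter (fun n => ¬ n ≤ k),
        x - k = y - k → x = y := by
      intro x hx y hy hxy
      simp only [Finset.mem_filter] at hx hy
      omega
    calc ∑ n ∈ F.filter (fun n => ¬ n ≤ k), r ^ (Nat.dist n k)
        = ∑ n ∈ F.filter (fun n => ¬ n ≤ k), r ^ (n - k) := by
          apply Finset.sum_congr rfl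
          intro n hn
          simp only [Finset.mem_filter] at hn
          rw [Nat.dist_eq_sub_of_le_right (by omega : k ≤ n)]
      _ = ∑ j ∈ (F.filter (fun n => ¬ n ≤ k)).image (fun n => n - k), r ^ j :=
          (Finset.sum_image inj).symm
      _ ≤ ∑' j : ℕ, r ^ j := Summable.sum_le_tsum _ (fun j _ => by positivity) hsum
      _ = (1 - r)⁻¹ := htsum
  have hrr : 0 < 1 - r := by linarith
  calc ∑ n ∈ F, r ^ (Nat.dist n k) = _ + _ := part.symm
    _ ≤ (1 - r)⁻¹ + (1 - r)⁻¹ := add_le_add h1 h2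
    _ = 2 / (1 - r) := by field_simp; ring

lemma main_aux {s : ℝ} (hs : 0 < s) (hs' : s < 1/2) (g : ℝ → ℝ)
    (hg : Integrable g) (hg0 : ∀ ξ, 0 ≤ g ξ) :
    ∑' k : ℕ, ((2:ℝ) ^ k) ^ (2*s) * ∫ ξ in LPregion k, g ξ
      ≤ 160/3 * ((∫ ξ : ℝ, g ξ / (1 + ξ ^ 2)) +
          ∑' n : ℕ, ((2:ℝ) ^ n) ^ (2*s) * ∫ ξ : ℝ, w ξ ((2:ℝ) ^ n) * g ξ) := by
  classical
  set r : ℝ := (2:ℝ) ^ (2*s - 2 : ℝ) with hrdef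
  have hr0 : 0 < r := Real.rpow_pos_of_pos (by norm_num) _
  have hrhalf : r ≤ 1/2 := by
    have h := Real.rpow_lt_rpow_of_exponent_lt (by norm_num : (1:ℝ) < 2)
      (by linarith : 2*s - 2 < (-1 : ℝ))
    rw [Real.rpow_neg_one] at h
    rw [hrdef]
    norm_num at h ⊢
    linarith
  have hr1 : r < 1 := by linarith
  set m : ℕ → ℝ := fun k => ∫ ξ in LPregion k, g ξ with hmdef
  set A : ℝ := ∫ ξ : ℝ, g ξ / (1 + ξ ^ 2) with hAdef
  set a : ℕ → ℝ := fun k => ((2:ℝ) ^ k) ^ (2*s) * m k with hadef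
  set b : ℕ → ℝ := fun n => ((2:ℝ) ^ n) ^ (2*s) * ∫ ξ : ℝ, w ξ ((2:ℝ) ^ n) * g ξ with hbdef
  show ∑' k, a k ≤ 160/3 * (A + ∑' n, b n)
  have hm0 : ∀ k, 0 ≤ m k := fun k =>
    setIntegral_nonneg (LP_measurableSet k) fun ξ _ => hg0 ξ
  have hCpos : ∀ n : ℕ, (0:ℝ) < ((2:ℝ) ^ n) ^ (2*s) := fun n =>
    Real.rpow_pos_of_pos (by positivity) _
  have ha0 : ∀ k, 0 ≤ a k := fun k => mul_nonneg (hCpos k).le (hm0 k)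
  have hwint : ∀ n : ℕ, Integrable (fun ξ => w ξ ((2:ℝ) ^ n) * g ξ) := by
    intro n
    apply hg.bdd_mul (c := 3/16) ((w_continuous _ (by positivity)).aestronglyMeasurable)
    refine Filter.Eventually.of_forall (fun ξ => ?_)
    rw [Real.norm_eq_abs, abs_of_nonneg (w_nonneg _ _)]
    exact w_le_const _ _ (by positivity)
  have hwg0 : ∀ (n : ℕ) (ξ : ℝ), 0 ≤ w ξ ((2:ℝ) ^ n) * g ξ := fun n ξ =>
    mul_nonneg (w_nonneg _ _) (hg0 ξ)
  have hb0 : ∀ n, 0 ≤ b n := fun n =>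
    mul_nonneg (hCpos n).le (integral_nonneg fun ξ => hwg0 n ξ)
  have hA0 : 0 ≤ A := integral_nonneg fun ξ => div_nonneg (hg0 ξ) (by positivity)
  by_cases hsa : Summable a
  · -- per-n decomposition
    have hWsum : ∀ n : ℕ, HasSum (fun k => ∫ ξ in LPregion k, w ξ ((2:ℝ) ^ n) * g ξ)
        (∫ ξ : ℝ, w ξ ((2:ℝ) ^ n) * g ξ) := by
      intro n
      have h := MeasureTheory.hasSum_integral_iUnion LP_measurableSet LP_disjoint
        ((hwint n).integrableOn (s := ⋃ k, LPregion k))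
      rwa [LP_iUnion, setIntegral_univ] at h
    have hI : ∀ n k : ℕ, ∫ ξ in LPregion k, w ξ ((2:ℝ) ^ n) * g ξ
        ≤ 3 * ((2:ℝ)⁻¹) ^ (2 * Nat.dist n k) * m k := by
      intro n k
      calc ∫ ξ in LPregion k, w ξ ((2:ℝ) ^ n) * g ξ
          ≤ ∫ ξ in LPregion k, (3 * ((2:ℝ)⁻¹) ^ (2 * Nat.dist n k)) * g ξ := by
            apply setIntegral_mono_on ((hwint n).integrableOn)
              ((hg.const_mul _).integrableOn) (LP_measurableSet k)
            intro ξ hξ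
            exact mul_le_mul_of_nonneg_right (w_region_bound hξ) (hg0 ξ)
        _ = 3 * ((2:ℝ)⁻¹) ^ (2 * Nat.dist n k) * m k := by
            rw [integral_const_mul]
    have hsum3 : ∀ n : ℕ, Summable (fun k => 3 * r ^ (Nat.dist n k) * a k) := by
      intro n
      apply Summable.of_nonneg_of_le
        (fun k => mul_nonneg (mul_nonneg (by norm_num) (by positivity)) (ha0 k))
        (fun k => ?_) (hsa.mul_left 3)
      have hle1 : r ^ (Nat.dist n k) ≤ 1 := pow_le_one₀ hr0.le hr1.le
      nlinarith [ha0 k, pow_nonneg hr0.le (Nat.dist n k)]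
    have hbk : ∀ n, b n ≤ ∑' k, 3 * r ^ (Nat.dist n k) * a k := by
      intro n
      have hb_eq : b n = ∑' k, ((2:ℝ) ^ n) ^ (2*s) *
          ∫ ξ in LPregion k, w ξ ((2:ℝ) ^ n) * g ξ := by
        rw [tsum_mul_left, (hWsum n).tsum_eq]
      rw [hb_eq]
      apply Summable.tsum_le_tsum _ ((hWsum n).summable.mul_left _) (hsum3 n)
      intro k
      have step1 : ((2:ℝ) ^ n) ^ (2*s) * (3 * ((2:ℝ)⁻¹) ^ (2 * Nat.dist n k) * m k)
          ≤ 3 * r ^ (Nat.dist n k) * a k := by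
        calc ((2:ℝ) ^ n) ^ (2*s) * (3 * ((2:ℝ)⁻¹) ^ (2 * Nat.dist n k) * m k)
            = (((2:ℝ) ^ n) ^ (2*s) * (3 * ((2:ℝ)⁻¹) ^ (2 * Nat.dist n k))) * m k := by ring
          _ ≤ (3 * ((2:ℝ) ^ (2*s - 2 : ℝ)) ^ (Nat.dist n k) * ((2:ℝ) ^ k) ^ (2*s)) * m k :=
              mul_le_mul_of_nonneg_right (coeff_bound hs n k) (hm0 k)
          _ = 3 * r ^ (Nat.dist n k) * a k := by rw [hadef]; ring
      exact le_trans (mul_le_mul_of_nonneg_left (hI n k) (hCpos n).le) step1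
    have key : ∀ M : ℕ, ∑ n ∈ Finset.range M, b n ≤ 12 * ∑' k, a k := by
      intro M
      calc ∑ n ∈ Finset.range M, b n
          ≤ ∑ n ∈ Finset.range M, ∑' k, 3 * r ^ (Nat.dist n k) * a k :=
            Finset.sum_le_sum fun n _ => hbk n
        _ = ∑' k, ∑ n ∈ Finset.range M, 3 * r ^ (Nat.dist n k) * a k :=
            (Summable.tsum_finsetSum fun n _ => hsum3 n).symm
        _ ≤ ∑' k, 12 * a k := by
            apply Summable.tsum_le_tsum _ (summable_sum fun n _ => hsum3 n) (hsa.mul_left 12)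
            intro k
            have hg4 : ∑ n ∈ Finset.range M, r ^ (Nat.dist n k) ≤ 4 := by
              have h1 := geom_dist_sum_le hr0.le hr1 k (Finset.range M)
              have h12 : (0:ℝ) < 1 - r := by linarith
              have h2 : 2 / (1 - r) ≤ 4 := by rw [div_le_iff₀ h12]; linarith
              linarith
            calc ∑ n ∈ Finset.range M, 3 * r ^ (Nat.dist n k) * a k
                = 3 * a k * ∑ n ∈ Finset.range M, r ^ (Nat.dist n k) := by
                  rw [Finset.mul_sum]; apply Finset.sum_congr rfl; intros; ring
              _ ≤ 3 * a k * 4 := by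
                  exact mul_le_mul_of_nonneg_left hg4 (mul_nonneg (by norm_num) (ha0 k))
              _ = 12 * a k := by ring
        _ = 12 * ∑' k, a k := tsum_mul_left
    have hsb : Summable b := summable_of_sum_range_le hb0 key
    have hdivint : Integrable (fun ξ : ℝ => g ξ / (1 + ξ ^ 2)) := by
      have heq : (fun ξ : ℝ => g ξ / (1 + ξ ^ 2)) = fun ξ => (1 + ξ ^ 2)⁻¹ * g ξ := by
        funext ξ; rw [div_eq_mul_inv, mul_comm]
      rw [heq]
      apply hg.bdd_mul (c := 1) ((Continuous.inv₀ (by continuity)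
        (fun ξ => by positivity)).aestronglyMeasurable)
      refine Filter.Eventually.of_forall (fun ξ => ?_)
      show ‖(1 + ξ ^ 2)⁻¹‖ ≤ (1:ℝ)
      rw [Real.norm_eq_abs, abs_of_nonneg (by positivity)]
      exact inv_le_one_of_one_le₀ (by nlinarith [sq_nonneg ξ])
    have hak : ∀ k, a k ≤ (if k = 0 then 2*A else 0) + (160/3) * b k := by
      intro k
      rcases eq_or_ne k 0 with hk | hk
      · subst hk
        rw [if_pos rfl]
        have h1 : m 0 ≤ 2 * A := by
          calc m 0 ≤ ∫ ξ in LPregion 0, 2 * (g ξ / (1 + ξ ^ 2)) := by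
                apply setIntegral_mono_on hg.integrableOn
                  ((hdivint.const_mul 2).integrableOn) (LP_measurableSet 0)
                intro ξ hξ
                have hξ1 : |ξ| ≤ 1 := by simpa [LPregion] using hξ
                have hξ2 : ξ ^ 2 ≤ 1 := by nlinarith [sq_abs ξ, abs_nonneg ξ]
                have hpos : (0:ℝ) < 1 + ξ ^ 2 := by positivity
                calc g ξ = g ξ * (1 + ξ ^ 2) / (1 + ξ ^ 2) := by field_simp
                  _ ≤ 2 * g ξ / (1 + ξ ^ 2) := by
                      apply div_le_div_of_nonneg_right ?_ hpos.le
                      nlinarith [hg0 ξ]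
                  _ = 2 * (g ξ / (1 + ξ ^ 2)) := by ring
            _ = 2 * ∫ ξ in LPregion 0, g ξ / (1 + ξ ^ 2) := by rw [integral_const_mul]
            _ ≤ 2 * A := by
                apply mul_le_mul_of_nonneg_left _ (by norm_num)
                exact setIntegral_le_integral hdivint
                  (Filter.Eventually.of_forall fun ξ => div_nonneg (hg0 ξ) (by positivity))
        have ha00 : a 0 = m 0 := by
          show ((2:ℝ) ^ (0:ℕ)) ^ (2*s) * m 0 = m 0
          norm_num
        rw [ha00]
        have hb00 := hb0 0
        nlinarith
      · rw [if_neg hk]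
        have h1 : m k ≤ (160/3) * ∫ ξ : ℝ, w ξ ((2:ℝ) ^ k) * g ξ := by
          calc m k ≤ ∫ ξ in LPregion k, (160/3) * (w ξ ((2:ℝ) ^ k) * g ξ) := by
                apply setIntegral_mono_on hg.integrableOn
                  (((hwint k).const_mul _).integrableOn) (LP_measurableSet k)
                intro ξ hξ
                have hw := w_region_lower hk hξ
                nlinarith [hg0 ξ]
            _ = (160/3) * ∫ ξ in LPregion k, w ξ ((2:ℝ) ^ k) * g ξ := by
                rw [integral_const_mul]
            _ ≤ (160/3) * ∫ ξ : ℝ, w ξ ((2:ℝ) ^ k) * g ξ := by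
                apply mul_le_mul_of_nonneg_left _ (by norm_num)
                exact setIntegral_le_integral (hwint k)
                  (Filter.Eventually.of_forall fun ξ => hwg0 k ξ)
        have h2 := mul_le_mul_of_nonneg_left h1 (hCpos k).le
        calc a k = ((2:ℝ) ^ k) ^ (2*s) * m k := rfl
          _ ≤ ((2:ℝ) ^ k) ^ (2*s) * ((160/3) * ∫ ξ : ℝ, w ξ ((2:ℝ) ^ k) * g ξ) := h2
          _ = 0 + (160/3) * b k := by rw [hbdef]; ring
    have hsing : Summable (fun k : ℕ => if k = 0 then 2*A else 0) :=
      (hasSum_ite_eq 0 (2*A)).summable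
    calc ∑' k, a k ≤ ∑' k, ((if k = 0 then 2*A else 0) + (160/3) * b k) :=
          Summable.tsum_le_tsum hak hsa (hsing.add (hsb.mul_left _))
      _ = 2*A + (160/3) * ∑' n, b n := by
          rw [Summable.tsum_add hsing (hsb.mul_left _), tsum_ite_eq, tsum_mul_left]
      _ ≤ 160/3 * (A + ∑' n, b n) := by
          have hBnn : 0 ≤ ∑' n, b n := tsum_nonneg hb0
          nlinarith
  · rw [tsum_eq_zero_of_not_summable hsa]
    have hBnn : 0 ≤ ∑' n, b n := tsum_nonneg hb0
    nlinarith

/-- For `0 < s < 1/2` and `f ∈ L²(ℝ)` (given via `f̂`),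
`Σ_M M^{2s}‖P_M f‖²_{L²} ≤ C(s)(‖f‖²_{H^{-1}} + Σ_N N^{2s} ∫ w(ξ,N)|f̂(ξ)|² dξ)`,
where `‖f‖²_{H^{-1}} = ∫ |f̂(ξ)|²/(1+ξ²) dξ`. -/
theorem stmt5 (s : ℝ) (hs : 0 < s) (hs' : s < 1 / 2) :
    ∃ C > (0 : ℝ), ∀ fhat : ℝ → ℂ,
      Integrable (fun ξ : ℝ => ‖fhat ξ‖ ^ 2) →
      ∑' k : ℕ, ((2 : ℝ) ^ k) ^ (2 * s) * ∫ ξ in LPregion k, ‖fhat ξ‖ ^ 2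
        ≤ C * ((∫ ξ : ℝ, ‖fhat ξ‖ ^ 2 / (1 + ξ ^ 2)) +
            ∑' n : ℕ, ((2 : ℝ) ^ n) ^ (2 * s) * ∫ ξ : ℝ, w ξ ((2 : ℝ) ^ n) * ‖fhat ξ‖ ^ 2) := by
  refine ⟨160/3, by norm_num, fun fhat hint => ?_⟩
  exact main_aux hs (by linarith) (fun ξ => ‖fhat ξ‖ ^ 2) hint (fun ξ => by positivity)
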